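/- Let P(λ) be an n×n matrix polynomial of degree d and L(λ) = A − λB a dn×dn linearization admitting a right-sided factorization L(λ)H(λ) = g(λ) ⊗ P(λ) valid at λ̃₀, where the block H_i(λ) = I_n for some fixed i. Let (λ₀, x) be an exact unit eigenpair of P with v := H(λ₀)x, and (λ̃₀, x̃) an approximate unit eigenpair with λ̃₀ not an eigenvalue of L. With A₁, B₁ the trailing blocks of a generalized Schur form of (A,B) deflating the eigenpair (λ₀, v), one has sin∠(x, x̃) ≤ ‖g(λ̃₀)‖₂ · ‖P(λ̃₀)x̃‖₂ / σ_min(A₁ − λ̃₀B₁). -/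

import Mathlib

open scoped BigOperators
open Matrix

/-- Euclidean norm of a finite complex vector. -/
noncomputable def cenorm {ι : Type*} [Fintype ι] (v : ι → ℂ) : ℝ :=
  Real.sqrt (∑ i, ‖v i‖ ^ 2)

/-- Standard Hermitian inner product `w* u` (conjugate-linear in `w`). -/
noncomputable def cinner {ι : Type*} [Fintype ι] (w v : ι → ℂ) : ℂ :=
  ∑ i, (starRingEnd ℂ) (w i) * v i

/-- Sine of the acute angle between two vectors. -/
noncomputable def sinAngle {ι : Type*} [Fintype ι] (u w : ι → ℂ) : ℝ :=
  Real.sqrt (1 - ‖cinner w u‖ ^ 2 / (cenorm u ^ 2 * cenorm w ^ 2))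

/-- Spectral (operator 2-) norm of a square complex matrix. -/
noncomputable def opNorm {k : Type*} [Fintype k] [DecidableEq k]
    (M : Matrix k k ℂ) : ℝ :=
  ‖Matrix.toEuclideanCLM (𝕜 := ℂ) M‖

/-- Smallest singular value of an invertible matrix: `σ_min(M) = ‖M⁻¹‖₂⁻¹`. -/
noncomputable def sigmaMin {k : Type*} [Fintype k] [DecidableEq k]
    (M : Matrix k k ℂ) : ℝ :=
  (opNorm M⁻¹)⁻¹

/-- Kronecker product `g ⊗ P ∈ ℂ^{dn×n}` of a vector `g ∈ ℂ^d`
and a matrix `P ∈ ℂ^{n×n}`. -/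
def kron {d n : ℕ} (g : Fin d → ℂ) (P : Matrix (Fin n) (Fin n) ℂ) :
    Matrix (Fin d × Fin n) (Fin n) ℂ :=
  Matrix.of fun p j => g p.1 * P p.2 j

section Helpers

variable {ι : Type*} [Fintype ι]

lemma cenorm_nonneg' (v : ι → ℂ) : 0 ≤ cenorm v := Real.sqrt_nonneg _

lemma sum_sq_nonneg' (v : ι → ℂ) : 0 ≤ ∑ i, ‖v i‖ ^ 2 :=
  Finset.sum_nonneg fun _ _ => sq_nonneg _

lemma cenorm_sq (v : ι → ℂ) : cenorm v ^ 2 = ∑ i, ‖v i‖ ^ 2 :=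
  Real.sq_sqrt (sum_sq_nonneg' v)

lemma cenorm_eq_norm (v : ι → ℂ) :
    cenorm v = ‖(WithLp.equiv 2 (ι → ℂ)).symm v‖ := by
  rw [EuclideanSpace.norm_eq]
  simp only [cenorm]; rfl

lemma cinner_eq_inner (w v : ι → ℂ) :
    cinner w v = (inner ℂ ((WithLp.equiv 2 (ι → ℂ)).symm w) ((WithLp.equiv 2 (ι → ℂ)).symm v) : ℂ) := by
  rw [PiLp.inner_apply]
  simp only [cinner, RCLike.inner_apply']; rfl

lemma cenorm_mulVec_le {k : Type*} [Fintype k] [DecidableEq k] (M : Matrix k k ℂ) (z : k → ℂ) :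
    cenorm (M.mulVec z) ≤ opNorm M * cenorm z := by
  rw [cenorm_eq_norm, cenorm_eq_norm]
  have h := (Matrix.toEuclideanCLM (𝕜 := ℂ) M).le_opNorm ((WithLp.equiv 2 (k → ℂ)).symm z)
  rwa [WithLp.equiv_symm_apply, Matrix.toEuclideanCLM_toLp] at h

lemma cenorm_comp_le {κ : Type*} [Fintype κ] (e : κ → ι) (he : Function.Injective e)
    (f : ι → ℂ) : cenorm (fun k => f (e k)) ≤ cenorm f := by
  classical
  apply Real.sqrt_le_sqrt
  rw [← Finset.sum_image (f := fun p => ‖f p‖ ^ 2)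
    (g := e) (fun a _ b _ h => he h)]
  exact Finset.sum_le_sum_of_subset_of_nonneg (Finset.subset_univ _)
    (fun _ _ _ => sq_nonneg _)

lemma sum_abs_sq_eq (v : ι → ℂ) :
    ((∑ i, ‖v i‖ ^ 2 : ℝ) : ℂ) = star v ⬝ᵥ v := by
  rw [dotProduct, Complex.ofReal_sum]
  refine Finset.sum_congr rfl fun j _ => ?_
  rw [Complex.sq_norm, Complex.normSq_eq_conj_mul_self]
  rfl

lemma cenorm_mulVec_unitary {k : Type*} [Fintype k] [DecidableEq k]
    (U : Matrix k k ℂ) (hU : Uᴴ * U = 1) (z : k → ℂ) :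
    cenorm (U.mulVec z) = cenorm z := by
  unfold cenorm
  congr 1
  have key : star (U.mulVec z) ⬝ᵥ (U.mulVec z) = star z ⬝ᵥ z := by
    rw [Matrix.star_mulVec, dotProduct_mulVec, Matrix.vecMul_vecMul, hU,
      Matrix.vecMul_one]
  have := (sum_abs_sq_eq (U.mulVec z)).trans (key.trans (sum_abs_sq_eq z).symm)
  exact_mod_cast this

lemma sinAngle_le_cenorm_sub (x xt : ι → ℂ) (hx : cenorm x = 1) (hxt : cenorm xt = 1)
    (c : ℂ) : sinAngle x xt ≤ cenorm (fun k => xt k - c * x k) := by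
  have h1 : sinAngle x xt = Real.sqrt (1 - ‖cinner xt x‖ ^ 2) := by
    rw [sinAngle, hx, hxt]; norm_num
  rw [h1]
  have h2 : (fun k => xt k - c * x k) = fun k => (xt - c • x) k := by
    funext k; simp
  rw [h2]
  refine le_trans (Real.sqrt_le_sqrt ?_) (le_of_eq (Real.sqrt_sq (cenorm_nonneg' _)))
  -- 1 - |t|^2 ≤ ‖xt - c•x‖^2
  set X := (WithLp.equiv 2 (ι → ℂ)).symm x with hX
  set XT := (WithLp.equiv 2 (ι → ℂ)).symm xt with hXT
  have hXn : ‖X‖ = 1 := by rw [← cenorm_eq_norm]; exact hx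
  have hXTn : ‖XT‖ = 1 := by rw [← cenorm_eq_norm]; exact hxt
  have hsub : (WithLp.equiv 2 (ι → ℂ)).symm (xt - c • x) = XT - c • X := rfl
  rw [cenorm_eq_norm, hsub]
  have hns := @norm_sub_sq ℂ _ _ _ _ XT (c • X)
  rw [inner_smul_right, norm_smul, hXTn, hXn] at hns
  have ht : cinner xt x = (inner ℂ XT X : ℂ) := cinner_eq_inner xt x
  set t : ℂ := (inner ℂ XT X : ℂ) with hti
  have key : (0:ℝ) ≤ Complex.normSq (c - (starRingEnd ℂ) t) := Complex.normSq_nonneg _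
  have habs : Complex.normSq (c - (starRingEnd ℂ) t)
      = Complex.normSq c + Complex.normSq t - 2 * (c * t).re := by
    rw [Complex.normSq_sub]
    rw [Complex.normSq_conj]
    congr 2
    rw [Complex.conj_conj]
  have hre : RCLike.re (c * t) = (c * t).re := rfl
  have hab : ‖cinner xt x‖ ^ 2 = Complex.normSq t := by
    rw [ht, Complex.sq_norm]
  have hcn : ‖c‖ ^ 2 = Complex.normSq c := by
    rw [Complex.sq_norm]
  rw [hab, hns, hre]
  nlinarith [key, habs, hcn]

end Helpers


lemma sum_subtype_ne {ι : Type*} [Fintype ι] [DecidableEq ι] {M : Type*} [AddCommMonoid M]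
    (p₀ : ι) (f : ι → M) :
    ∑ q : {p : ι // p ≠ p₀}, f q.1 = ∑ q ∈ Finset.univ.erase p₀, f q :=
  (Finset.sum_subtype (Finset.univ.erase p₀) (fun x => by simp) f).symm


/-- Eigenvector error bound (Theorem 4.1): for a linearization
`L(λ) = A - λB` of `P` with a right-sided factorization `L(λ)H(λ) = g(λ)⊗P(λ)`
valid at `λ₀` and `λ̃₀` (with `H(λ)` of full column rank and `g(λ) ≠ 0`),
whose `i`-th block of `H` is `I_n`, for unit eigenpairs `(λ₀,x)` exact and
`(λ̃₀,x̃)` approximate, and a generalized Schur form deflating `(λ₀, H(λ₀)x)`,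
one has `sin∠(x,x̃) ≤ ‖g(λ̃₀)‖‖P(λ̃₀)x̃‖ / sep(λ̃₀,(A₁,B₁))`. -/
theorem stmt16 {n d : ℕ}
    (P : ℂ → Matrix (Fin n) (Fin n) ℂ)
    (Amat Bmat : Matrix (Fin d × Fin n) (Fin d × Fin n) ℂ)
    (H : ℂ → Matrix (Fin d × Fin n) (Fin n) ℂ)
    (g : ℂ → Fin d → ℂ)
    (i : Fin d)
    (hP2 : ∀ (μ : ℂ) (k j : Fin n), H μ (i, k) j = if k = j then 1 else 0)
    (lam0 lamt : ℂ)
    (hfact : ∀ μ : ℂ, μ = lam0 ∨ μ = lamt →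
      (Amat - μ • Bmat) * H μ = kron (g μ) (P μ) ∧ g μ ≠ 0 ∧
        Function.Injective (H μ).mulVec)
    (x xt : Fin n → ℂ) (hx : cenorm x = 1) (hxt : cenorm xt = 1)
    (heig : (P lam0).mulVec x = 0)
    (hnoteig : (Amat - lamt • Bmat).det ≠ 0)
    (Q Z : Matrix (Fin d × Fin n) (Fin d × Fin n) ℂ)
    (hQ : Q ∈ Matrix.unitaryGroup (Fin d × Fin n) ℂ)
    (hZ : Z ∈ Matrix.unitaryGroup (Fin d × Fin n) ℂ)
    (p₀ : Fin d × Fin n)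
    (hz1 : ∀ p, Z p p₀ = (H lam0).mulVec x p / (cenorm ((H lam0).mulVec x) : ℂ))
    (hA0 : ∀ p, p ≠ p₀ → (Qᴴ * Amat * Z) p p₀ = 0)
    (hB0 : ∀ p, p ≠ p₀ → (Qᴴ * Bmat * Z) p p₀ = 0) :
    sinAngle x xt ≤
      cenorm (g lamt) * cenorm ((P lamt).mulVec xt) /
        sigmaMin (Matrix.of fun p q : {p : Fin d × Fin n // p ≠ p₀} =>
          (Qᴴ * Amat * Z) p.1 q.1 - lamt * (Qᴴ * Bmat * Z) p.1 q.1) := by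
  classical
  obtain ⟨hft, hgt, hHt⟩ := hfact lamt (Or.inr rfl)
  set v : Fin d × Fin n → ℂ := (H lam0).mulVec x with hv
  set vt : Fin d × Fin n → ℂ := (H lamt).mulVec xt with hvt
  set r : Fin n → ℂ := (P lamt).mulVec xt with hrdef
  set L : Matrix (Fin d × Fin n) (Fin d × Fin n) ℂ := Amat - lamt • Bmat with hLdef
  set T : Matrix (Fin d × Fin n) (Fin d × Fin n) ℂ := Qᴴ * L * Z with hTdef
  set Mm : Matrix {p : Fin d × Fin n // p ≠ p₀} {p : Fin d × Fin n // p ≠ p₀} ℂ :=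
    Matrix.of (fun p q : {p : Fin d × Fin n // p ≠ p₀} =>
      (Qᴴ * Amat * Z) p.1 q.1 - lamt * (Qᴴ * Bmat * Z) p.1 q.1) with hMm
  -- unitary facts
  have hsZ := Matrix.mem_unitaryGroup_iff'.mp hZ
  have hZZ := Matrix.mem_unitaryGroup_iff.mp hZ
  have hsQ := Matrix.mem_unitaryGroup_iff'.mp hQ
  have hQQ := Matrix.mem_unitaryGroup_iff.mp hQ
  rw [Matrix.star_eq_conjTranspose] at hsZ hZZ hsQ hQQ
  -- block extraction
  have hblock : ∀ (μ : ℂ) (y : Fin n → ℂ) (k : Fin n), (H μ).mulVec y (i, k) = y k := by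
    intro μ y k
    simp only [Matrix.mulVec, dotProduct]
    rw [Finset.sum_congr rfl (fun j _ => by rw [hP2 μ k j])]
    simp
  have hinj : Function.Injective (fun k : Fin n => ((i, k) : Fin d × Fin n)) := by
    intro a b hab
    exact (Prod.mk.injEq _ _ _ _ ▸ hab).2
  have hvblk : ∀ k, v (i, k) = x k := fun k => hblock lam0 x k
  have hvtblk : ∀ k, vt (i, k) = xt k := fun k => hblock lamt xt k
  have hvnorm : 1 ≤ cenorm v := by
    have h1 := cenorm_comp_le _ hinj v
    have h2 : (fun k => v (i, k)) = x := funext hvblk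
    rw [h2, hx] at h1
    exact h1
  have hvne : (cenorm v : ℂ) ≠ 0 := by
    simp only [ne_eq, Complex.ofReal_eq_zero]
    intro h; rw [h] at hvnorm; linarith
  have hz1' : ∀ p, v p = (cenorm v : ℂ) * Z p p₀ := by
    intro p; rw [hz1 p]; field_simp
  -- Zᴴ v = ‖v‖ e_{p₀}
  have hZv : Zᴴ.mulVec v = fun p => if p = p₀ then (cenorm v : ℂ) else 0 := by
    funext p
    have h1 : Zᴴ.mulVec v p = (cenorm v : ℂ) * (Zᴴ * Z) p p₀ := by
      simp only [Matrix.mulVec, dotProduct, Matrix.mul_apply]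
      rw [Finset.mul_sum]
      refine Finset.sum_congr rfl fun q _ => ?_
      rw [hz1' q]; ring
    rw [h1, hsZ]
    simp [Matrix.one_apply]
  set u : Fin d × Fin n → ℂ := Zᴴ.mulVec vt with hu
  set c : ℂ := u p₀ / (cenorm v : ℂ) with hc
  set w : Fin d × Fin n → ℂ := fun p => if p = p₀ then 0 else u p with hw
  have hZu : Z.mulVec u = vt := by
    rw [hu, Matrix.mulVec_mulVec, hZZ, Matrix.one_mulVec]
  have hwu : w = u - c • (Zᴴ.mulVec v) := by
    funext p
    rw [hZv]
    by_cases hp : p = p₀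
    · subst hp
      simp only [hw, if_pos rfl, Pi.sub_apply, Pi.smul_apply, smul_eq_mul, hc]
      field_simp
      simp
    · simp [hw, hp]
  have hsub : vt - c • v = Z.mulVec w := by
    rw [hwu, Matrix.mulVec_sub, Matrix.mulVec_smul, hZu, Matrix.mulVec_mulVec, hZZ,
      Matrix.one_mulVec]
  -- Step A
  have hA : sinAngle x xt ≤ cenorm w := by
    have s1 : sinAngle x xt ≤ cenorm (fun k => xt k - c * x k) :=
      sinAngle_le_cenorm_sub x xt hx hxt c
    have s2 : (fun k => xt k - c * x k) = fun k => (vt - c • v) (i, k) := by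
      funext k
      simp [hvblk, hvtblk]
    have s3 : cenorm (fun k => (vt - c • v) (i, k)) ≤ cenorm (vt - c • v) :=
      cenorm_comp_le _ hinj _
    rw [s2] at s1
    have s4 : cenorm (vt - c • v) = cenorm w := by
      rw [hsub, cenorm_mulVec_unitary Z hsZ]
    linarith
  -- T facts
  have hTapp : ∀ p q, T p q = (Qᴴ * Amat * Z) p q - lamt * (Qᴴ * Bmat * Z) p q := by
    intro p q
    simp [hTdef, hLdef, Matrix.sub_mul, Matrix.mul_sub, Matrix.smul_mul, Matrix.mul_smul,
      Matrix.sub_apply, Matrix.smul_apply, smul_eq_mul]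
  have hTcol : ∀ p, p ≠ p₀ → T p p₀ = 0 := by
    intro p hp
    rw [hTapp, hA0 p hp, hB0 p hp]; ring
  have hdQ : IsUnit Qᴴ.det := by
    refine IsUnit.of_mul_eq_one Q.det ?_
    rw [← Matrix.det_mul, hsQ, Matrix.det_one]
  have hdZ : IsUnit Z.det := by
    refine IsUnit.of_mul_eq_one Zᴴ.det ?_
    rw [← Matrix.det_mul, hZZ, Matrix.det_one]
  have hdT : IsUnit T.det := by
    rw [hTdef, Matrix.det_mul, Matrix.det_mul]
    exact (hdQ.mul (isUnit_iff_ne_zero.mpr hnoteig)).mul hdZ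
  have hTinj : Function.Injective T.mulVec :=
    Matrix.mulVec_injective_iff_isUnit.mpr ((Matrix.isUnit_iff_isUnit_det T).mpr hdT)
  have hTpp : T p₀ p₀ ≠ 0 := by
    intro h0
    have hcol : T.mulVec (Pi.single p₀ 1) = T.mulVec 0 := by
      rw [Matrix.mulVec_zero, Matrix.mulVec_single]
      funext p
      by_cases hp : p = p₀
      · subst hp; simp [h0]
      · simp [hTcol p hp]
    have := congrFun (hTinj hcol) p₀
    simp at this
  -- Mm is T restricted
  have hMT : ∀ p q : {p : Fin d × Fin n // p ≠ p₀}, Mm p q = T p.1 q.1 := by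
    intro p q
    rw [hTapp]
    rfl
  -- row identity
  have hrow : ∀ (zz : Fin d × Fin n → ℂ) (p : Fin d × Fin n),
      T.mulVec zz p = T p p₀ * zz p₀ +
        ∑ q : {p : Fin d × Fin n // p ≠ p₀}, T p q.1 * zz q.1 := by
    intro zz p
    rw [sum_subtype_ne p₀ (fun q => T p q * zz q)]
    rw [Matrix.mulVec, dotProduct,
      ← Finset.add_sum_erase Finset.univ (fun q => T p q * zz q) (Finset.mem_univ p₀)]
  -- M injectivity
  have hMker : ∀ w' : {p : Fin d × Fin n // p ≠ p₀} → ℂ, Mm.mulVec w' = 0 → w' = 0 := by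
    intro w' hw'
    set S : ℂ := ∑ q : {p : Fin d × Fin n // p ≠ p₀}, T p₀ q.1 * w' q with hS
    set W : Fin d × Fin n → ℂ := fun p => if hp : p = p₀ then -S / T p₀ p₀ else w' ⟨p, hp⟩
      with hW
    have hWrest : ∀ q : {p : Fin d × Fin n // p ≠ p₀}, W q.1 = w' q := by
      intro q; simp only [hW, dif_neg q.2]
    have hTW : T.mulVec W = T.mulVec 0 := by
      rw [Matrix.mulVec_zero]
      funext p
      simp only [Pi.zero_apply]
      by_cases hp : p = p₀
      · rw [hp, hrow W p₀]
        have e1 : W p₀ = -S / T p₀ p₀ := by simp only [hW, dif_pos rfl]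
        have e2 : ∑ q : {p : Fin d × Fin n // p ≠ p₀}, T p₀ q.1 * W q.1 = S := by
          rw [hS]; exact Finset.sum_congr rfl fun q _ => by rw [hWrest q]
        rw [e1, e2, mul_comm, div_mul_cancel₀ _ hTpp]
        ring
      · rw [hrow W p, hTcol p hp, zero_mul, zero_add]
        have h2 : ∀ q : {p : Fin d × Fin n // p ≠ p₀}, T p q.1 * W q.1 = Mm ⟨p, hp⟩ q * w' q := by
          intro q; rw [hWrest q, hMT ⟨p, hp⟩ q]
        rw [Finset.sum_congr rfl fun q _ => h2 q]
        exact congrFun hw' ⟨p, hp⟩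
    have hW0 := hTinj hTW
    funext q
    have hq := congrFun hW0 q.1
    rw [hWrest q] at hq
    exact hq
  have hMinj : Function.Injective Mm.mulVec := by
    intro a b hab
    have h1 : Mm.mulVec (a - b) = 0 := by rw [Matrix.mulVec_sub, hab, sub_self]
    exact sub_eq_zero.mp (hMker _ h1)
  have hMdet : IsUnit Mm.det := (Matrix.isUnit_iff_isUnit_det Mm).mp
    (Matrix.mulVec_injective_iff_isUnit.mp hMinj)
  have hMinvmul : Mm⁻¹ * Mm = 1 := Matrix.nonsing_inv_mul Mm hMdet
  -- y
  set y : {p : Fin d × Fin n // p ≠ p₀} → ℂ := fun q => u q.1 with hy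
  have henw : cenorm w = cenorm y := by
    unfold cenorm
    congr 1
    rw [sum_subtype_ne p₀ (fun p => ‖u p‖ ^ 2),
      ← Finset.add_sum_erase Finset.univ (fun p => ‖w p‖ ^ 2) (Finset.mem_univ p₀)]
    have e1 : ‖w p₀‖ ^ 2 = 0 := by simp [hw]
    rw [e1, zero_add]
    refine Finset.sum_congr rfl fun p hp => ?_
    have : p ≠ p₀ := Finset.ne_of_mem_erase hp
    simp [hw, this]
  have hLvt : L.mulVec vt = fun p => g lamt p.1 * r p.2 := by
    have h2 : L.mulVec vt = (L * H lamt).mulVec xt := by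
      rw [hvt, Matrix.mulVec_mulVec]
    rw [h2, hft]
    funext p
    simp only [kron, Matrix.mulVec, dotProduct, Matrix.of_apply, hrdef]
    rw [Finset.mul_sum]
    exact Finset.sum_congr rfl fun j _ => mul_assoc _ _ _
  have hkron : cenorm (fun p : Fin d × Fin n => g lamt p.1 * r p.2)
      = cenorm (g lamt) * cenorm r := by
    unfold cenorm
    rw [← Real.sqrt_mul (sum_sq_nonneg' _)]
    congr 1
    rw [Fintype.sum_prod_type]
    rw [Fintype.sum_mul_sum (fun a => ‖g lamt a‖ ^ 2)
      (fun b => ‖r b‖ ^ 2)]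
    refine Finset.sum_congr rfl fun a _ => Finset.sum_congr rfl fun b _ => ?_
    rw [norm_mul, mul_pow]
  have hQLu : Qᴴ.mulVec (L.mulVec vt) = T.mulVec u := by
    rw [← hZu, Matrix.mulVec_mulVec, Matrix.mulVec_mulVec, hTdef, Matrix.mul_assoc]
  have hMy : Mm.mulVec y = fun p : {p : Fin d × Fin n // p ≠ p₀} =>
      Qᴴ.mulVec (L.mulVec vt) p.1 := by
    funext p
    rw [hQLu, hrow u p.1, hTcol p.1 p.2, zero_mul, zero_add]
    simp only [Matrix.mulVec, dotProduct, hy]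
    exact Finset.sum_congr rfl fun q _ => by rw [hMT p q]
  have hresid : cenorm (Mm.mulVec y) ≤ cenorm (g lamt) * cenorm r := by
    rw [hMy]
    have h1 : cenorm (fun p : {p : Fin d × Fin n // p ≠ p₀} => Qᴴ.mulVec (L.mulVec vt) p.1)
        ≤ cenorm (Qᴴ.mulVec (L.mulVec vt)) :=
      cenorm_comp_le Subtype.val Subtype.val_injective _
    have h2 : cenorm (Qᴴ.mulVec (L.mulVec vt)) = cenorm (L.mulVec vt) := by
      apply cenorm_mulVec_unitary
      rw [Matrix.conjTranspose_conjTranspose]; exact hQQ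
    refine h1.trans (le_of_eq ?_)
    rw [h2, hLvt, hkron]
  have hyb : cenorm y ≤ opNorm Mm⁻¹ * cenorm (Mm.mulVec y) := by
    have h1 : Mm⁻¹.mulVec (Mm.mulVec y) = y := by
      rw [Matrix.mulVec_mulVec, hMinvmul, Matrix.one_mulVec]
    calc cenorm y = cenorm (Mm⁻¹.mulVec (Mm.mulVec y)) := by rw [h1]
      _ ≤ opNorm Mm⁻¹ * cenorm (Mm.mulVec y) := cenorm_mulVec_le _ _
  have hON : (0:ℝ) ≤ opNorm Mm⁻¹ := norm_nonneg _
  have final : sinAngle x xt ≤ opNorm Mm⁻¹ * (cenorm (g lamt) * cenorm r) := by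
    calc sinAngle x xt ≤ cenorm w := hA
      _ = cenorm y := henw
      _ ≤ opNorm Mm⁻¹ * cenorm (Mm.mulVec y) := hyb
      _ ≤ opNorm Mm⁻¹ * (cenorm (g lamt) * cenorm r) :=
          mul_le_mul_of_nonneg_left hresid hON
  simp only [sigmaMin, div_eq_mul_inv, inv_inv]
  calc sinAngle x xt ≤ opNorm Mm⁻¹ * (cenorm (g lamt) * cenorm r) := final
    _ = cenorm (g lamt) * cenorm r * opNorm Mm⁻¹ := mul_comm _ _
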